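/- Let f, g ∈ L^1[0,1] have finite disjoint Haar supports contained in the dyadic intervals strictly inside [0,1] (excluding [0,1] itself and [0,2]). Let F(f) = {I dyadic : c_I(f) = 0 but c_{I^+}(f) ≠ 0 or c_{I^-}(f) ≠ 0} and assume supp_H(g) ∩ F(f) = ∅. Assume that for some α > 0, |c_J(f)| ≥ α for all J ∈ supp_H(f), and |c_J(g)| ≤ 1 for all J ∈ supp_H(g). Then ‖f‖_{L^1} ≤ (5/α + 1)·‖f + g‖_{L^1}. -/

import Mathlib

open MeasureTheory Set
open scoped Classical

noncomputable section

/-- The dyadic interval `[k/2^n, (k+1)/2^n)`. -/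
def dyadic (n k : ℕ) : Set ℝ := Set.Ico ((k : ℝ) / 2 ^ n) (((k : ℝ) + 1) / 2 ^ n)

/-- Left half `I⁺` of a dyadic interval. -/
def dplus (n k : ℕ) : Set ℝ := dyadic (n + 1) (2 * k)

/-- Right half `I⁻` of a dyadic interval. -/
def dminus (n k : ℕ) : Set ℝ := dyadic (n + 1) (2 * k + 1)

/-- Haar coefficient `c_I(f)` with respect to the L¹-normalized Haar system. -/
def haarC (f : ℝ → ℝ) (n k : ℕ) : ℝ :=
  (∫ x in dplus n k, f x) - ∫ x in dminus n k, f x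

/-- The L¹-normalized Haar function `h_I`. -/
def haarF (n k : ℕ) : ℝ → ℝ := fun x =>
  if x ∈ dplus n k then (2 : ℝ) ^ n else if x ∈ dminus n k then -(2 : ℝ) ^ n else 0

/-- Index set for the Haar system: the dyadic intervals of `[0,1]` together with `[0,2]`. -/
inductive HIdx where
  | root : HIdx
  | node : ℕ → ℕ → HIdx
  deriving DecidableEq

/-- Validity of an index: `node n k` encodes `[k/2^n, (k+1)/2^n) ⊆ [0,1)`. -/
def HIdx.valid : HIdx → Prop
  | .root => True
  | .node n k => k < 2 ^ n

/-- The interval encoded by an index. -/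
def HIdx.iset : HIdx → Set ℝ
  | .root => Set.Ico (0 : ℝ) 2
  | .node n k => dyadic n k

/-- Haar coefficient, where `c_{[0,2]}(f) = ∫_{[0,1)} f` (for `f` supported in `[0,1)`). -/
def hcoef (f : ℝ → ℝ) : HIdx → ℝ
  | .root => ∫ x in Set.Ico (0 : ℝ) 1, f x
  | .node n k => haarC f n k


namespace S9

/-- average (unnormalized integral) of f over dyadic interval -/
def aI (f : ℝ → ℝ) (n k : ℕ) : ℝ := ∫ x in dyadic n k, f x

lemma dyadic_left_eq (n k : ℕ) : ((2 * k : ℕ) : ℝ) / 2 ^ (n+1) = (k : ℝ) / 2 ^ n := by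
  push_cast; ring

lemma dyadic_right_eq (n k : ℕ) : (((2 * k + 1 : ℕ) : ℝ) + 1) / 2 ^ (n+1) = ((k : ℝ) + 1) / 2 ^ n := by
  push_cast; ring

lemma dyadic_mid_eq (n k : ℕ) : (((2 * k : ℕ) : ℝ) + 1) / 2 ^ (n+1) = ((2 * k + 1 : ℕ) : ℝ) / 2 ^ (n+1) := by
  push_cast; ring

lemma dyadic_split (n k : ℕ) : dyadic n k = dyadic (n+1) (2*k) ∪ dyadic (n+1) (2*k+1) := by
  unfold dyadic
  rw [dyadic_left_eq, dyadic_mid_eq, dyadic_right_eq]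
  rw [Set.Ico_union_Ico_eq_Ico]
  · rw [div_le_div_iff₀ (by positivity) (by positivity)]
    push_cast
    have h2 : (0:ℝ) ≤ 2 ^ n := by positivity
    ring_nf; nlinarith
  · rw [div_le_div_iff₀ (by positivity) (by positivity)]
    push_cast
    have h2 : (0:ℝ) ≤ 2 ^ n := by positivity
    ring_nf; nlinarith

lemma dyadic_disj (n k : ℕ) : Disjoint (dyadic (n+1) (2*k)) (dyadic (n+1) (2*k+1)) := by
  unfold dyadic
  rw [Set.Ico_disjoint_Ico]
  rw [dyadic_mid_eq]
  exact le_max_of_le_right (min_le_left _ _)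

lemma measurable_dyadic (n k : ℕ) : MeasurableSet (dyadic n k) := measurableSet_Ico

lemma aI_split (f : ℝ → ℝ) (hf : Integrable f) (n k : ℕ) :
    aI f n k = aI f (n+1) (2*k) + aI f (n+1) (2*k+1) := by
  unfold aI
  rw [dyadic_split n k]
  exact setIntegral_union (dyadic_disj n k) (measurable_dyadic _ _)
    hf.integrableOn hf.integrableOn

lemma haarC_eq (f : ℝ → ℝ) (n k : ℕ) :
    haarC f n k = aI f (n+1) (2*k) - aI f (n+1) (2*k+1) := rfl

lemma aI_child_plus (f : ℝ → ℝ) (hf : Integrable f) (n k : ℕ) :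
    aI f (n+1) (2*k) = (aI f n k + haarC f n k) / 2 := by
  rw [aI_split f hf n k, haarC_eq]; ring

lemma aI_child_minus (f : ℝ → ℝ) (hf : Integrable f) (n k : ℕ) :
    aI f (n+1) (2*k+1) = (aI f n k - haarC f n k) / 2 := by
  rw [aI_split f hf n k, haarC_eq]; ring

lemma aI_add (f g : ℝ → ℝ) (hf : Integrable f) (hg : Integrable g) (n k : ℕ) :
    aI (fun x => f x + g x) n k = aI f n k + aI g n k := by
  unfold aI
  exact integral_add hf.integrableOn hg.integrableOn

lemma dyadic_zero : dyadic 0 0 = Set.Ico (0:ℝ) 1 := by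
  unfold dyadic; norm_num


/-- binary tree sum over leaves; `Tree L m k` = sum of `L j` over the `2^m` leaves below
    node `k` at co-level `m`. -/
def Tree (L : ℕ → ℝ) : ℕ → ℕ → ℝ
  | 0, k => L k
  | (m+1), k => Tree L m (2*k) + Tree L m (2*k+1)

/-- descendant relation on dyadic indices -/
def Desc (n k n' k' : ℕ) : Prop :=
  n ≤ n' ∧ k * 2^(n'-n) ≤ k' ∧ k' < (k+1) * 2^(n'-n)

lemma Desc_self (n k : ℕ) : Desc n k n k := by
  refine ⟨le_rfl, ?_, ?_⟩ <;> simp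

lemma Desc_childL (n k n' k' : ℕ) (h : Desc (n+1) (2*k) n' k') : Desc n k n' k' := by
  obtain ⟨h1, h2, h3⟩ := h
  have hd : n'-n = (n'-(n+1)) + 1 := by omega
  refine ⟨by omega, ?_, ?_⟩ <;> rw [hd, pow_succ] <;> nlinarith [h2, h3]

lemma Desc_childR (n k n' k' : ℕ) (h : Desc (n+1) (2*k+1) n' k') : Desc n k n' k' := by
  obtain ⟨h1, h2, h3⟩ := h
  have hd : n'-n = (n'-(n+1)) + 1 := by omega
  refine ⟨by omega, ?_, ?_⟩ <;> rw [hd, pow_succ] <;> nlinarith [h2, h3]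

lemma Desc_split (n k n' k' : ℕ) (h : Desc n k n' k') :
    (n' = n ∧ k' = k) ∨ Desc (n+1) (2*k) n' k' ∨ Desc (n+1) (2*k+1) n' k' := by
  obtain ⟨h1, h2, h3⟩ := h
  rcases Nat.eq_or_lt_of_le h1 with heq | hlt
  · left
    constructor
    · omega
    · subst heq; simp at h2 h3; omega
  · right
    have hd : n'-n = (n'-(n+1)) + 1 := by omega
    rw [hd, pow_succ] at h2 h3
    by_cases hc : k' < (2*k+1) * 2^(n'-(n+1))
    · left; exact ⟨by omega, by nlinarith, hc⟩
    · right
      push_neg at hc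
      exact ⟨by omega, hc, by nlinarith⟩

section Fixed
variable (f : ℝ → ℝ)

/-- `f` has a nonzero Haar coefficient somewhere in the subtree of `(n,k)` -/
def act (n k : ℕ) : Prop := ∃ n' k', Desc n k n' k' ∧ haarC f n' k' ≠ 0

lemma not_act_childL {n k : ℕ} (h : ¬ act f n k) : ¬ act f (n+1) (2*k) := by
  intro ⟨n', k', hd, hne⟩; exact h ⟨n', k', Desc_childL n k n' k' hd, hne⟩

lemma not_act_childR {n k : ℕ} (h : ¬ act f n k) : ¬ act f (n+1) (2*k+1) := by
  intro ⟨n', k', hd, hne⟩; exact h ⟨n', k', Desc_childR n k n' k' hd, hne⟩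

lemma not_act_self {n k : ℕ} (h : ¬ act f n k) : haarC f n k = 0 := by
  by_contra hne; exact h ⟨n, k, Desc_self n k, hne⟩

lemma act_cases {n k : ℕ} (h : act f n k) :
    haarC f n k ≠ 0 ∨ act f (n+1) (2*k) ∨ act f (n+1) (2*k+1) := by
  obtain ⟨n', k', hd, hne⟩ := h
  rcases Desc_split n k n' k' hd with ⟨h1, h2⟩ | hL | hR
  · left; rw [← h1, ← h2] at *; exact hne
  · right; left; exact ⟨n', k', hL, hne⟩
  · right; right; exact ⟨n', k', hR, hne⟩

end Fixed

/-! ### potential functions -/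

def phi (α β s : ℝ) : ℝ := min 2 (β/2 * max (α - s) 0)

lemma phi_nonneg {α β : ℝ} (hβ : 0 < β) (s : ℝ) : 0 ≤ phi α β s := by
  unfold phi
  apply le_min (by norm_num)
  positivity

lemma phi_le_two (α β s : ℝ) : phi α β s ≤ 2 := min_le_left _ _

lemma phi_lip {α β : ℝ} (hβ : 0 < β) (x y : ℝ) : phi α β x ≤ phi α β y + β/2 * |x - y| := by
  unfold phi
  have h1 : β/2 * max (α - x) 0 ≤ β/2 * max (α - y) 0 + β/2 * |x - y| := by
    rcases le_total (α - x) 0 with h | h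
    · rw [max_eq_right h, mul_zero]; positivity
    · rw [max_eq_left h]
      have : α - x ≤ (α - y) + |x - y| := by
        rcases abs_cases (x - y) with ⟨h2, _⟩ | ⟨h2, _⟩ <;> linarith
      have h3 : α - x ≤ max (α - y) 0 + |x - y| := by
        rcases le_total (α - y) 0 with h4 | h4
        · rw [max_eq_right h4]
          rcases abs_cases (x - y) with ⟨h2, _⟩ | ⟨h2, _⟩ <;> linarith
        · rw [max_eq_left h4]; linarith
      nlinarith
  calc min 2 (β/2 * max (α - x) 0) ≤ min (2 + β/2 * |x-y|) (β/2 * max (α - y) 0 + β/2 * |x - y|) := by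
        apply le_min
        · apply (min_le_left _ _).trans; nlinarith [abs_nonneg (x-y)]
        · exact (min_le_right _ _).trans h1
    _ ≤ min 2 (β/2 * max (α - y) 0) + β/2 * |x - y| := by
        rw [← min_add_add_right]

/-- potential for nodes with nonzero f-coefficient ("T"-nodes):
    `b` = g-average, `mh` = h-average -/
def wT (α β b mh : ℝ) : ℝ := 2 - |b| + phi α β |mh|

/-- potential for nodes with zero f-coefficient: `a` = f-average, `b` = g-average -/
def w0 (a b : ℝ) : ℝ := 2 + Real.sign a * b

lemma sign_mul_le_abs (a b : ℝ) : Real.sign a * b ≤ |b| := by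
  rcases lt_trichotomy a 0 with h | h | h
  · rw [Real.sign_of_neg h, neg_mul, one_mul]; exact neg_le_abs b
  · rw [h, Real.sign_zero, zero_mul]; exact abs_nonneg b
  · rw [Real.sign_of_pos h, one_mul]; exact le_abs_self b

lemma neg_abs_le_sign_mul (a b : ℝ) : -|b| ≤ Real.sign a * b := by
  rcases lt_trichotomy a 0 with h | h | h
  · rw [Real.sign_of_neg h, neg_mul, one_mul]; exact neg_le_neg (le_abs_self b)
  · rw [h, Real.sign_zero, zero_mul]; exact neg_nonpos_of_nonneg (abs_nonneg b)
  · rw [Real.sign_of_pos h, one_mul]; exact neg_abs_le b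

lemma sign_half (a : ℝ) : Real.sign (a/2) = Real.sign a := by
  rcases lt_trichotomy a 0 with h | h | h
  · rw [Real.sign_of_neg h, Real.sign_of_neg (by linarith)]
  · rw [h]; norm_num
  · rw [Real.sign_of_pos h, Real.sign_of_pos (by linarith)]

lemma sign_mul_self_half (a : ℝ) : Real.sign a * (a/2) = |a|/2 := by
  rcases lt_trichotomy a 0 with h | h | h
  · rw [Real.sign_of_neg h, abs_of_neg h]; ring
  · rw [h]; simp
  · rw [Real.sign_of_pos h, abs_of_pos h]; ring


section PART3
variable {α β : ℝ}

lemma abs_half (x : ℝ) : |x/2| = |x|/2 := by rw [abs_div, abs_two]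

lemma myabs_sub (a b : ℝ) : |a - b| ≤ |a| + |b| := by
  rw [sub_eq_add_neg]
  exact (abs_add_le _ _).trans (by rw [abs_neg])

lemma sign_abs_mul (a b : ℝ) (ha : a ≠ 0) : |Real.sign a * b| = |b| := by
  rcases lt_trichotomy a 0 with h | h | h
  · rw [Real.sign_of_neg h]; simp
  · exact absurd h ha
  · rw [Real.sign_of_pos h]; simp

lemma ineq1a (hα : 0 < α) (hβ : 0 < β) (hαβ : α * β = 5)
    (ap am bb mp mm Hx : ℝ) (hmp : mp = ap + bb) (hmm : mm = am + bb)
    (hu : α ≤ |mp - mm|) (hH : |mp| + |mm| ≤ Hx) :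
    |ap| + |am| ≤ (1+β) * Hx - (2 - |2*bb| + phi α β |mp + mm|) := by
  have h1 : phi α β |mp + mm| ≤ 2 := phi_le_two _ _ _
  have h2 : |ap| ≤ |mp| + |bb| := by
    have : ap = mp - bb := by rw [hmp]; ring
    rw [this]; exact myabs_sub _ _
  have h3 : |am| ≤ |mm| + |bb| := by
    have : am = mm - bb := by rw [hmm]; ring
    rw [this]; exact myabs_sub _ _
  have h4 : |2*bb| = 2*|bb| := by rw [abs_mul, abs_two]
  have h5 : |mp - mm| ≤ |mp| + |mm| := myabs_sub _ _
  have h6 : (5:ℝ) ≤ β * Hx := by nlinarith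
  linarith

lemma ineq1bT (hβ : 0 < β) (b m mact t ad : ℝ) (hm : m = mact + t) (had : ad = t - b/2) :
    wT α β b m + |ad| ≤ wT α β (b/2) mact + (1+β)*|t| := by
  unfold wT
  have h1 : phi α β |m| ≤ phi α β |mact| + β/2 * abs (|m| - |mact|) := phi_lip hβ _ _
  have h2 : abs (|m| - |mact|) ≤ |t| := by
    have h := abs_abs_sub_abs_le_abs_sub m mact
    rw [show m - mact = t by rw [hm]; ring] at h
    exact h
  have h3 : |ad| ≤ |t| + |b|/2 := by
    rw [had]
    calc |t - b/2| ≤ |t| + |b/2| := myabs_sub _ _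
      _ = |t| + |b|/2 := by rw [abs_half]
  have h4 : |b/2| = |b|/2 := abs_half b
  have h5 : 0 ≤ |t| := abs_nonneg t
  nlinarith [mul_le_mul_of_nonneg_left h2 (le_of_lt (half_pos hβ))]

lemma ineq1b0 (hα : 0 < α) (hβ : 0 < β) (hαβ : α * β = 5)
    (b m t ad aact : ℝ) (hu : α ≤ |m - 2*t|) (had : ad = t - b/2) :
    wT α β b m + |ad| ≤ w0 aact (b/2) + (1+β)*|t| := by
  unfold wT w0
  have h0 : α - |m| ≤ 2*|t| := by
    have h1 : |m - 2*t| ≤ |m| + 2*|t| := by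
      calc |m - 2*t| ≤ |m| + |2*t| := myabs_sub _ _
        _ = |m| + 2*|t| := by rw [abs_mul, abs_two]
    linarith
  have h2 : phi α β |m| ≤ β * |t| := by
    apply (min_le_right _ _).trans
    have : max (α - |m|) 0 ≤ 2*|t| := max_le h0 (by positivity)
    nlinarith
  have h3 : -|b/2| ≤ Real.sign aact * (b/2) := neg_abs_le_sign_mul _ _
  have h4 : |ad| ≤ |t| + |b|/2 := by
    rw [had]
    calc |t - b/2| ≤ |t| + |b/2| := myabs_sub _ _
      _ = |t| + |b|/2 := by rw [abs_half]
  have h5 : |b/2| = |b|/2 := abs_half b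
  linarith

lemma ineq2a (hα : 0 < α) (hβ : 0 < β) (hαβ : α * β = 5)
    (a b m : ℝ) (hb1 : |b| ≤ 1) (hm : m = a + b) :
    w0 a b + |a/2| ≤ wT α β (b/2) (m/2) + (1+β) * |m/2| := by
  unfold wT w0
  rw [abs_half a, abs_half b, abs_half m]
  have hphi0 : 0 ≤ phi α β (|m|/2) := phi_nonneg hβ _
  by_cases ha : a = 0
  · subst ha
    rw [Real.sign_zero, zero_mul]
    have hmb : |m| = |b| := by rw [hm]; simp
    rw [hmb]
    simp only [abs_zero]
    have hx : 0 ≤ phi α β (|b|/2) := phi_nonneg hβ _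
    nlinarith [abs_nonneg b]
  rcases le_or_gt (Real.sign a * b) 0 with hs | hs
  · -- misaligned
    have hsb : Real.sign a * b = -|b| := by
      have := sign_abs_mul a b ha
      rcases abs_cases (Real.sign a * b) with ⟨h1, _⟩ | ⟨h1, _⟩
      · rw [this] at h1; nlinarith [abs_nonneg b]
      · rw [this] at h1; linarith
    have hma : |a| ≤ |m| + |b| := by
      rw [hm]
      calc |a| = |(a+b) - b| := by ring_nf
        _ ≤ |a+b| + |b| := myabs_sub _ _
    rw [hsb]
    have hbm : 0 ≤ β * (|m|/2) := by positivity
    linarith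
  · -- aligned
    have hsb : Real.sign a * b = |b| := by
      have := sign_abs_mul a b ha
      rcases abs_cases (Real.sign a * b) with ⟨h1, _⟩ | ⟨h1, _⟩
      · rw [this] at h1; linarith
      · rw [this] at h1; nlinarith [abs_nonneg b]
    have hmab : |m| = |a| + |b| := by
      rcases lt_trichotomy a 0 with h | h | h
      · have hb : b ≤ 0 := by
          rw [Real.sign_of_neg h] at hs; nlinarith
        rw [hm, abs_of_nonpos (by linarith), abs_of_neg h, abs_of_nonpos hb]; ring
      · exact absurd h ha
      · have hb : 0 ≤ b := by
          rw [Real.sign_of_pos h] at hs; nlinarith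
        rw [hm, abs_of_nonneg (by linarith), abs_of_pos h, abs_of_nonneg hb]
    rw [hsb, hmab]
    rcases le_or_gt 1 (β * ((|a|+|b|)/2)) with hc | hc
    · have hx : 0 ≤ phi α β ((|a|+|b|)/2) := phi_nonneg hβ _
      linarith
    · have hphi2 : (2:ℝ) ≤ phi α β ((|a|+|b|)/2) := by
        unfold phi
        apply le_min le_rfl
        have h2 : α - (|a|+|b|)/2 ≤ max (α - (|a|+|b|)/2) 0 := le_max_left _ _
        nlinarith [mul_le_mul_of_nonneg_left h2 (by positivity : (0:ℝ) ≤ β/2)]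
      nlinarith [abs_nonneg a, abs_nonneg b]

lemma ineq3a (hβ : 0 < β) (a b bact bd t : ℝ) (hbsum : bact + bd = b) (ht : t = a/2 + bd) :
    w0 a b + |a/2| ≤ w0 (a/2) bact + (1+β)*|t| := by
  unfold w0
  rw [sign_half, abs_half]
  have h1 : Real.sign a * b - Real.sign a * bact = Real.sign a * t - |a|/2 := by
    have : b - bact = t - a/2 := by rw [← hbsum, ht]; ring
    calc Real.sign a * b - Real.sign a * bact = Real.sign a * (b - bact) := by ring
      _ = Real.sign a * t - Real.sign a * (a/2) := by rw [this]; ring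
      _ = Real.sign a * t - |a|/2 := by rw [sign_mul_self_half]
  have h2 : Real.sign a * t ≤ |t| := sign_mul_le_abs _ _
  have h3 : 0 ≤ |t| := abs_nonneg t
  nlinarith

lemma w_lb_T (hβ : 0 < β) (bb mh : ℝ) : 2 - |bb| ≤ wT α β bb mh := by
  unfold wT; have := phi_nonneg (α := α) hβ |mh|; linarith

lemma w_lb_0 (a bb : ℝ) : 2 - |bb| ≤ w0 a bb := by
  unfold w0; have := neg_abs_le_sign_mul a bb; linarith

lemma wT_ub (b m : ℝ) : wT α β b m ≤ 4 - |b| := by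
  unfold wT; have := phi_le_two α β |m|; linarith

lemma w0_ub (a b : ℝ) : w0 a b ≤ 2 + |b| := by
  unfold w0; have := sign_mul_le_abs a b; linarith

end PART3

section PART4

lemma ineq3b (a b bp bm : ℝ) (h : bp + bm = b) : w0 a b ≤ w0 (a/2) bp + w0 (a/2) bm := by
  unfold w0
  rw [sign_half]
  have : Real.sign a * bp + Real.sign a * bm = Real.sign a * b := by rw [← h]; ring
  linarith


lemma Tree_succ (L : ℕ → ℝ) (m k : ℕ) :
    Tree L (m+1) k = Tree L m (2*k) + Tree L m (2*k+1) := rfl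

lemma Tree_lower (u : ℝ → ℝ) (hu : Integrable u) (N : ℕ) :
    ∀ m k n, n + m = N → |aI u n k| ≤ Tree (fun j => |aI u N j|) m k := by
  intro m
  induction m with
  | zero => intro k n hn; have : n = N := by omega
            subst this; exact le_rfl
  | succ m ih =>
    intro k n hn
    rw [Tree_succ, aI_split u hu n k]
    calc |aI u (n+1) (2*k) + aI u (n+1) (2*k+1)|
        ≤ |aI u (n+1) (2*k)| + |aI u (n+1) (2*k+1)| := abs_add_le _ _
      _ ≤ _ := add_le_add (ih (2*k) (n+1) (by omega)) (ih (2*k+1) (n+1) (by omega))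

lemma Tree_dead (f : ℝ → ℝ) (hf : Integrable f) (N : ℕ) :
    ∀ m k n, n + m = N → ¬ act f n k → Tree (fun j => |aI f N j|) m k = |aI f n k| := by
  intro m
  induction m with
  | zero => intro k n hn _; have : n = N := by omega
            subst this; rfl
  | succ m ih =>
    intro k n hn hdead
    have hc : haarC f n k = 0 := not_act_self f hdead
    rw [Tree_succ, ih (2*k) (n+1) (by omega) (not_act_childL f hdead),
        ih (2*k+1) (n+1) (by omega) (not_act_childR f hdead),
        aI_child_plus f hf n k, aI_child_minus f hf n k, hc]
    rw [show (aI f n k + 0)/2 = aI f n k / 2 by ring,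
        show (aI f n k - 0)/2 = aI f n k / 2 by ring, abs_half]
    ring

/-- the potential assigned to a node -/
def Wnode (f g : ℝ → ℝ) (α β : ℝ) (n k : ℕ) : ℝ :=
  if haarC f n k = 0 then w0 (aI f n k) (aI g n k)
  else wT α β (aI g n k) (aI f n k + aI g n k)

lemma Wnode_lb {α β : ℝ} (hβ : 0 < β) (f g : ℝ → ℝ) (n k : ℕ) :
    2 - |aI g n k| ≤ Wnode f g α β n k := by
  unfold Wnode
  split
  · exact w_lb_0 _ _
  · exact w_lb_T hβ _ _

section MainInd
variable {f g : ℝ → ℝ} {α β : ℝ} {N : ℕ}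

set_option maxHeartbeats 1000000 in
theorem main_ind (hf : Integrable f) (hg : Integrable g)
    (hα : 0 < α) (hβ : 0 < β) (hαβ : α * β = 5)
    (hNf : ∀ n k : ℕ, N ≤ n → haarC f n k = 0)
    (hdisj : ∀ n k : ℕ, k < 2 ^ n → haarC f n k ≠ 0 → haarC g n k = 0)
    (hgF : ∀ n k : ℕ, k < 2 ^ n → haarC g n k ≠ 0 →
      ¬ (haarC f n k = 0 ∧ (haarC f (n + 1) (2 * k) ≠ 0 ∨ haarC f (n + 1) (2 * k + 1) ≠ 0)))
    (hflb : ∀ n k : ℕ, k < 2 ^ n → haarC f n k ≠ 0 → α ≤ |haarC f n k|)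
    (hbB : ∀ n k : ℕ, k < 2 ^ n → |aI g n k| ≤ 1) :
    ∀ m n k, n + m = N → k < 2^n → act f n k →
      Tree (fun j => |aI f N j|) m k ≤
        (1+β) * Tree (fun j => |aI (fun x => f x + g x) N j|) m k - Wnode f g α β n k := by
  have hh : Integrable (fun x => f x + g x) := hf.add hg
  intro m
  induction m with
  | zero =>
    intro n k hn hk hact
    obtain ⟨n', k', ⟨hle, _, _⟩, hne⟩ := hact
    exact absurd (hNf n' k' (by omega)) hne
  | succ m ih =>
    intro n k hn hk hact
    -- abbreviations
    set a := aI f n k with ha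
    set b := aI g n k with hb
    have hap : aI f (n+1) (2*k) = (a + haarC f n k)/2 := aI_child_plus f hf n k
    have ham : aI f (n+1) (2*k+1) = (a - haarC f n k)/2 := aI_child_minus f hf n k
    have hbp : aI g (n+1) (2*k) = (b + haarC g n k)/2 := aI_child_plus g hg n k
    have hbm : aI g (n+1) (2*k+1) = (b - haarC g n k)/2 := aI_child_minus g hg n k
    have hkL : 2*k < 2^(n+1) := by rw [pow_succ]; omega
    have hkR : 2*k+1 < 2^(n+1) := by rw [pow_succ]; omega
    have hnL : (n+1) + m = N := by omega
    -- Th lower bounds on children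
    have hThL : |aI f (n+1) (2*k) + aI g (n+1) (2*k)| ≤
        Tree (fun j => |aI (fun x => f x + g x) N j|) m (2*k) := by
      rw [← aI_add f g hf hg]; exact Tree_lower _ hh N m (2*k) (n+1) hnL
    have hThR : |aI f (n+1) (2*k+1) + aI g (n+1) (2*k+1)| ≤
        Tree (fun j => |aI (fun x => f x + g x) N j|) m (2*k+1) := by
      rw [← aI_add f g hf hg]; exact Tree_lower _ hh N m (2*k+1) (n+1) hnL
    rw [Tree_succ, Tree_succ]
    set TfL := Tree (fun j => |aI f N j|) m (2*k)
    set TfR := Tree (fun j => |aI f N j|) m (2*k+1)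
    set ThL := Tree (fun j => |aI (fun x => f x + g x) N j|) m (2*k)
    set ThR := Tree (fun j => |aI (fun x => f x + g x) N j|) m (2*k+1)
    have h1β : (0:ℝ) ≤ 1+β := by linarith
    by_cases hu0 : haarC f n k = 0
    · -- type S or G
      have hW : Wnode f g α β n k = w0 a b := if_pos hu0
      have hapz : aI f (n+1) (2*k) = a/2 := by rw [hap, hu0]; ring
      have hamz : aI f (n+1) (2*k+1) = a/2 := by rw [ham, hu0]; ring
      by_cases hT : haarC f (n+1) (2*k) ≠ 0 ∨ haarC f (n+1) (2*k+1) ≠ 0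
      · -- type S : v = 0
        have hv0 : haarC g n k = 0 := by
          by_contra hvne
          exact hgF n k hk hvne ⟨hu0, hT⟩
        have hbpz : aI g (n+1) (2*k) = b/2 := by rw [hbp, hv0]; ring
        have hbmz : aI g (n+1) (2*k+1) = b/2 := by rw [hbm, hv0]; ring
        have hb1 : |b| ≤ 1 := hbB n k hk
        have habs : |b/2| = |b|/2 := abs_half b
        rcases hT with hTL | hTR
        · have hactL : act f (n+1) (2*k) := ⟨n+1, 2*k, Desc_self _ _, hTL⟩
          have IHL := ih (n+1) (2*k) hnL hkL hactL
          by_cases hactR : act f (n+1) (2*k+1)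
          · -- both act
            have IHR := ih (n+1) (2*k+1) hnL hkR hactR
            have hWL := Wnode_lb (α := α) hβ f g (n+1) (2*k)
            have hWR := Wnode_lb (α := α) hβ f g (n+1) (2*k+1)
            rw [hbpz] at hWL; rw [hbmz] at hWR
            have hW2 : w0 a b ≤ 2 + |b| := w0_ub a b
            rw [hW]; linarith
          · -- right dead
            have hTfR : TfR = |aI f (n+1) (2*k+1)| :=
              Tree_dead f hf N m (2*k+1) (n+1) hnL hactR
            have hIq := ineq2a hα hβ hαβ a b (a+b) hb1 rfl
            have hWL : Wnode f g α β (n+1) (2*k) = wT α β (b/2) ((a+b)/2) := by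
              unfold Wnode
              rw [if_neg hTL, hapz, hbpz]
              norm_num [wT]
              ring_nf
            have ht : |aI f (n+1) (2*k+1) + aI g (n+1) (2*k+1)| = |(a+b)/2| := by
              rw [hamz, hbmz]; ring_nf
            rw [ht] at hThR
            rw [hW, hTfR, hamz]
            rw [hWL] at IHL
            have hmul := mul_le_mul_of_nonneg_left hThR h1β
            linarith
        · have hactR : act f (n+1) (2*k+1) := ⟨n+1, 2*k+1, Desc_self _ _, hTR⟩
          have IHR := ih (n+1) (2*k+1) hnL hkR hactR
          by_cases hactL : act f (n+1) (2*k)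
          · -- both act
            have IHL := ih (n+1) (2*k) hnL hkL hactL
            have hWL := Wnode_lb (α := α) hβ f g (n+1) (2*k)
            have hWR := Wnode_lb (α := α) hβ f g (n+1) (2*k+1)
            rw [hbpz] at hWL; rw [hbmz] at hWR
            have hW2 : w0 a b ≤ 2 + |b| := w0_ub a b
            rw [hW]; linarith
          · -- left dead
            have hTfL : TfL = |aI f (n+1) (2*k)| :=
              Tree_dead f hf N m (2*k) (n+1) hnL hactL
            have hIq := ineq2a hα hβ hαβ a b (a+b) hb1 rfl
            have hWR : Wnode f g α β (n+1) (2*k+1) = wT α β (b/2) ((a+b)/2) := by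
              unfold Wnode
              rw [if_neg hTR, hamz, hbmz]
              norm_num [wT]
              ring_nf
            have ht : |aI f (n+1) (2*k) + aI g (n+1) (2*k)| = |(a+b)/2| := by
              rw [hapz, hbpz]; ring_nf
            rw [ht] at hThL
            rw [hW, hTfL, hapz]
            rw [hWR] at IHR
            have hmul := mul_le_mul_of_nonneg_left hThL h1β
            linarith
      · -- type G
        push_neg at hT
        obtain ⟨hTL0, hTR0⟩ := hT
        have hbsum : aI g (n+1) (2*k) + aI g (n+1) (2*k+1) = b := by
          rw [hbp, hbm]; ring
        by_cases hactL : act f (n+1) (2*k)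
        · have IHL := ih (n+1) (2*k) hnL hkL hactL
          have hWL : Wnode f g α β (n+1) (2*k) = w0 (a/2) (aI g (n+1) (2*k)) := by
            unfold Wnode; rw [if_pos hTL0, hapz]
          by_cases hactR : act f (n+1) (2*k+1)
          · -- both act
            have IHR := ih (n+1) (2*k+1) hnL hkR hactR
            have hWR : Wnode f g α β (n+1) (2*k+1) = w0 (a/2) (aI g (n+1) (2*k+1)) := by
              unfold Wnode; rw [if_pos hTR0, hamz]
            have hIq : w0 a b ≤ w0 (a/2) (aI g (n+1) (2*k)) + w0 (a/2) (aI g (n+1) (2*k+1)) :=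
              ineq3b a b _ _ hbsum
            rw [hW]; rw [hWL] at IHL; rw [hWR] at IHR; linarith
          · -- right dead
            have hTfR : TfR = |aI f (n+1) (2*k+1)| :=
              Tree_dead f hf N m (2*k+1) (n+1) hnL hactR
            have ht : aI f (n+1) (2*k+1) + aI g (n+1) (2*k+1) = a/2 + aI g (n+1) (2*k+1) := by
              rw [hamz]
            have hIq := ineq3a hβ a b (aI g (n+1) (2*k)) (aI g (n+1) (2*k+1))
              (aI f (n+1) (2*k+1) + aI g (n+1) (2*k+1)) hbsum ht
            rw [hW, hTfR, hamz]
            rw [hWL] at IHL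
            have hmul := mul_le_mul_of_nonneg_left hThR h1β
            linarith
        · by_cases hactR : act f (n+1) (2*k+1)
          · -- left dead, right act
            have IHR := ih (n+1) (2*k+1) hnL hkR hactR
            have hWR : Wnode f g α β (n+1) (2*k+1) = w0 (a/2) (aI g (n+1) (2*k+1)) := by
              unfold Wnode; rw [if_pos hTR0, hamz]
            have hTfL : TfL = |aI f (n+1) (2*k)| :=
              Tree_dead f hf N m (2*k) (n+1) hnL hactL
            have ht : aI f (n+1) (2*k) + aI g (n+1) (2*k) = a/2 + aI g (n+1) (2*k) := by
              rw [hapz]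
            have hbsum' : aI g (n+1) (2*k+1) + aI g (n+1) (2*k) = b := by linarith
            have hIq := ineq3a hβ a b (aI g (n+1) (2*k+1)) (aI g (n+1) (2*k))
              (aI f (n+1) (2*k) + aI g (n+1) (2*k)) hbsum' ht
            rw [hW, hTfL, hapz]
            rw [hWR] at IHR
            have hmul := mul_le_mul_of_nonneg_left hThL h1β
            linarith
          · -- both dead: impossible
            rcases act_cases f hact with hne | hL | hR
            · exact absurd hu0 hne
            · exact absurd hL hactL
            · exact absurd hR hactR
    · -- type T
      have hv0 : haarC g n k = 0 := hdisj n k hk hu0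
      have hαu : α ≤ |haarC f n k| := hflb n k hk hu0
      have hW : Wnode f g α β n k = wT α β b (a + b) := if_neg hu0
      have hbpz : aI g (n+1) (2*k) = b/2 := by rw [hbp, hv0]; ring
      have hbmz : aI g (n+1) (2*k+1) = b/2 := by rw [hbm, hv0]; ring
      have habs : |b/2| = |b|/2 := abs_half b
      by_cases hactL : act f (n+1) (2*k)
      · have IHL := ih (n+1) (2*k) hnL hkL hactL
        by_cases hactR : act f (n+1) (2*k+1)
        · -- both act
          have IHR := ih (n+1) (2*k+1) hnL hkR hactR
          have hWL := Wnode_lb (α := α) hβ f g (n+1) (2*k)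
          have hWR := Wnode_lb (α := α) hβ f g (n+1) (2*k+1)
          rw [hbpz] at hWL; rw [hbmz] at hWR
          have hW2 : wT α β b (a+b) ≤ 4 - |b| := wT_ub b (a+b)
          rw [hW]; linarith
        · -- right dead
          have hTfR : TfR = |aI f (n+1) (2*k+1)| :=
            Tree_dead f hf N m (2*k+1) (n+1) hnL hactR
          have hm : a + b = (aI f (n+1) (2*k) + aI g (n+1) (2*k)) +
              (aI f (n+1) (2*k+1) + aI g (n+1) (2*k+1)) := by
            rw [hap, ham, hbpz, hbmz]; ring
          have had : aI f (n+1) (2*k+1) =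
              (aI f (n+1) (2*k+1) + aI g (n+1) (2*k+1)) - b/2 := by
            rw [hbmz]; ring
          by_cases hcL : haarC f (n+1) (2*k) = 0
          · -- act child has zero coefficient : use ineq1b0
            have hres : α ≤ |(a + b) - 2*(aI f (n+1) (2*k+1) + aI g (n+1) (2*k+1))| := by
              have e : (a + b) - 2*(aI f (n+1) (2*k+1) + aI g (n+1) (2*k+1)) = haarC f n k := by
                rw [ham, hbmz]; ring
              rw [e]; exact hαu
            have hIq := ineq1b0 hα hβ hαβ b (a+b) _ _ (aI f (n+1) (2*k)) hres had
            have hWL : Wnode f g α β (n+1) (2*k) = w0 (aI f (n+1) (2*k)) (b/2) := by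
              unfold Wnode; rw [if_pos hcL, hbpz]
            rw [hW, hTfR]
            rw [hWL] at IHL
            have hmul := mul_le_mul_of_nonneg_left hThR h1β
            linarith
          · -- act child has nonzero coefficient : use ineq1bT
            have hIq := ineq1bT (α := α) hβ b (a+b) (aI f (n+1) (2*k) + aI g (n+1) (2*k)) _
              (aI f (n+1) (2*k+1)) hm had
            have hWL : Wnode f g α β (n+1) (2*k) =
                wT α β (b/2) (aI f (n+1) (2*k) + aI g (n+1) (2*k)) := by
              unfold Wnode; rw [if_neg hcL, hbpz]
            rw [hW, hTfR]
            rw [hWL] at IHL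
            have hmul := mul_le_mul_of_nonneg_left hThR h1β
            linarith
      · by_cases hactR : act f (n+1) (2*k+1)
        · -- left dead, right act
          have IHR := ih (n+1) (2*k+1) hnL hkR hactR
          have hTfL : TfL = |aI f (n+1) (2*k)| :=
            Tree_dead f hf N m (2*k) (n+1) hnL hactL
          have hm : a + b = (aI f (n+1) (2*k+1) + aI g (n+1) (2*k+1)) +
              (aI f (n+1) (2*k) + aI g (n+1) (2*k)) := by
            rw [hap, ham, hbpz, hbmz]; ring
          have had : aI f (n+1) (2*k) =
              (aI f (n+1) (2*k) + aI g (n+1) (2*k)) - b/2 := by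
            rw [hbpz]; ring
          by_cases hcR : haarC f (n+1) (2*k+1) = 0
          · have hres : α ≤ |(a + b) - 2*(aI f (n+1) (2*k) + aI g (n+1) (2*k))| := by
              have e : (a + b) - 2*(aI f (n+1) (2*k) + aI g (n+1) (2*k)) = -haarC f n k := by
                rw [hap, hbpz]; ring
              rw [e, abs_neg]; exact hαu
            have hIq := ineq1b0 hα hβ hαβ b (a+b) _ _ (aI f (n+1) (2*k+1)) hres had
            have hWR : Wnode f g α β (n+1) (2*k+1) = w0 (aI f (n+1) (2*k+1)) (b/2) := by
              unfold Wnode; rw [if_pos hcR, hbmz]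
            rw [hW, hTfL]
            rw [hWR] at IHR
            have hmul := mul_le_mul_of_nonneg_left hThL h1β
            linarith
          · have hIq := ineq1bT (α := α) hβ b (a+b) (aI f (n+1) (2*k+1) + aI g (n+1) (2*k+1)) _
              (aI f (n+1) (2*k)) hm had
            have hWR : Wnode f g α β (n+1) (2*k+1) =
                wT α β (b/2) (aI f (n+1) (2*k+1) + aI g (n+1) (2*k+1)) := by
              unfold Wnode; rw [if_neg hcR, hbmz]
            rw [hW, hTfL]
            rw [hWR] at IHR
            have hmul := mul_le_mul_of_nonneg_left hThL h1β
            linarith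
        · -- both dead : base case
          have hTfL : TfL = |aI f (n+1) (2*k)| :=
            Tree_dead f hf N m (2*k) (n+1) hnL hactL
          have hTfR : TfR = |aI f (n+1) (2*k+1)| :=
            Tree_dead f hf N m (2*k+1) (n+1) hnL hactR
          rw [hbpz] at hThL; rw [hbmz] at hThR
          have hres : α ≤ |(aI f (n+1) (2*k) + b/2) - (aI f (n+1) (2*k+1) + b/2)| := by
            have e : (aI f (n+1) (2*k) + b/2) - (aI f (n+1) (2*k+1) + b/2) = haarC f n k := by
              rw [hap, ham]; ring
            rw [e]; exact hαu
          have hIq := ineq1a hα hβ hαβ (aI f (n+1) (2*k)) (aI f (n+1) (2*k+1)) (b/2)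
            _ _ (ThL + ThR) rfl rfl hres (by linarith)
          rw [show 2*(b/2) = b from by ring,
              show (aI f (n+1) (2*k) + b/2) + (aI f (n+1) (2*k+1) + b/2) = a + b from by
                rw [hap, ham]; ring] at hIq
          rw [hW, hTfL, hTfR]
          unfold wT
          linarith

end MainInd
end PART4

section PART5

lemma bBound (g : ℝ → ℝ) (hg : Integrable g) (hgroot' : aI g 0 0 = 0)
    (hgub : ∀ n k : ℕ, k < 2 ^ n → |haarC g n k| ≤ 1) :
    ∀ n k : ℕ, k < 2 ^ n → |aI g n k| ≤ 1 := by
  intro n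
  induction n with
  | zero =>
    intro k hk
    have : k = 0 := by omega
    subst this; rw [hgroot']; norm_num
  | succ n ih =>
    intro k hk
    have hq : k = 2 * (k/2) ∨ k = 2 * (k/2) + 1 := by omega
    have hq2 : k/2 < 2^n := by
      have : (2:ℕ)^(n+1) = 2 * 2^n := by ring
      omega
    have h1 := ih (k/2) hq2
    have h2 := hgub n (k/2) hq2
    rcases hq with hq | hq
    · rw [hq, aI_child_plus g hg n (k/2)]
      rw [abs_half]
      calc |aI g n (k/2) + haarC g n (k/2)| / 2
          ≤ (|aI g n (k/2)| + |haarC g n (k/2)|)/2 := by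
            have := abs_add_le (aI g n (k/2)) (haarC g n (k/2)); linarith
        _ ≤ 1 := by linarith
    · rw [hq, aI_child_minus g hg n (k/2)]
      rw [abs_half]
      calc |aI g n (k/2) - haarC g n (k/2)| / 2
          ≤ (|aI g n (k/2)| + |haarC g n (k/2)|)/2 := by
            have := myabs_sub (aI g n (k/2)) (haarC g n (k/2)); linarith
        _ ≤ 1 := by linarith

lemma dyadic_out (n k : ℕ) (hk : 2^n ≤ k) : ∀ x ∈ dyadic n k, (1:ℝ) ≤ x := by
  intro x hx
  have h1 : ((k:ℝ))/2^n ≤ x := hx.1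
  have h2 : (1:ℝ) ≤ (k:ℝ)/2^n := by
    rw [le_div_iff₀ (by positivity : (0:ℝ) < 2^n), one_mul]
    have : ((2:ℝ))^n ≤ (k:ℝ) := by exact_mod_cast hk
    linarith
  linarith

lemma aI_zero_out (f : ℝ → ℝ) (hfs : ∀ x, x ∉ Set.Ico (0:ℝ) 1 → f x = 0)
    (n k : ℕ) (hk : 2^n ≤ k) : aI f n k = 0 := by
  unfold aI
  rw [setIntegral_congr_fun (measurable_dyadic n k) (g := fun _ => (0:ℝ))]
  · exact integral_zero _ _
  · intro x hx
    apply hfs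
    intro hx2
    have := dyadic_out n k hk x hx
    rcases hx2 with ⟨_, h2⟩
    linarith

lemma haarC_zero_out (f : ℝ → ℝ) (hfs : ∀ x, x ∉ Set.Ico (0:ℝ) 1 → f x = 0)
    (n k : ℕ) (hk : 2^n ≤ k) : haarC f n k = 0 := by
  rw [haarC_eq, aI_zero_out f hfs (n+1) (2*k) (by rw [pow_succ]; omega),
      aI_zero_out f hfs (n+1) (2*k+1) (by rw [pow_succ]; omega)]
  ring

lemma exists_N (f g : ℝ → ℝ)
    (hfs : ∀ x, x ∉ Set.Ico (0:ℝ) 1 → f x = 0) (hgs : ∀ x, x ∉ Set.Ico (0:ℝ) 1 → g x = 0)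
    (hffin : {p : ℕ × ℕ | p.2 < 2 ^ p.1 ∧ haarC f p.1 p.2 ≠ 0}.Finite)
    (hgfin : {p : ℕ × ℕ | p.2 < 2 ^ p.1 ∧ haarC g p.1 p.2 ≠ 0}.Finite) :
    ∃ N, ∀ n k, N ≤ n → haarC f n k = 0 ∧ haarC g n k = 0 := by
  classical
  set F := hffin.toFinset ∪ hgfin.toFinset with hF
  refine ⟨(F.sup Prod.fst) + 1, ?_⟩
  intro n k hn
  constructor
  · by_cases hk : k < 2^n
    · by_contra hne
      have hmem : (n, k) ∈ F := by
        rw [hF, Finset.mem_union]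
        left
        rw [Set.Finite.mem_toFinset]
        exact ⟨hk, hne⟩
      have := Finset.le_sup (f := Prod.fst) hmem
      simp at this
      omega
    · exact haarC_zero_out f hfs n k (by omega)
  · by_cases hk : k < 2^n
    · by_contra hne
      have hmem : (n, k) ∈ F := by
        rw [hF, Finset.mem_union]
        right
        rw [Set.Finite.mem_toFinset]
        exact ⟨hk, hne⟩
      have := Finset.le_sup (f := Prod.fst) hmem
      simp at this
      omega
    · exact haarC_zero_out g hgs n k (by omega)

lemma Tree_int (u : ℝ → ℝ) (hu : Integrable u) (N : ℕ) :
    ∀ m k n, n + m = N →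
      Tree (fun j => ∫ x in dyadic N j, |u x|) m k = ∫ x in dyadic n k, |u x| := by
  intro m
  induction m with
  | zero => intro k n hn; have : n = N := by omega
            subst this; rfl
  | succ m ih =>
    intro k n hn
    rw [Tree_succ, ih (2*k) (n+1) (by omega), ih (2*k+1) (n+1) (by omega)]
    exact (aI_split (fun x => |u x|) hu.abs n k).symm

lemma Tree_mono (L L' : ℕ → ℝ) (h : ∀ j, L j ≤ L' j) :
    ∀ m k, Tree L m k ≤ Tree L' m k := by
  intro m
  induction m with
  | zero => intro k; exact h k
  | succ m ih => intro k; rw [Tree_succ, Tree_succ]; exact add_le_add (ih _) (ih _)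

lemma abs_aI_le (u : ℝ → ℝ) (n k : ℕ) : |aI u n k| ≤ ∫ x in dyadic n k, |u x| := by
  unfold aI
  have := norm_integral_le_integral_norm (μ := volume.restrict (dyadic n k)) u
  simpa [Real.norm_eq_abs] using this

lemma int_eq_01 (u : ℝ → ℝ) (hu : Integrable u)
    (hus : ∀ x, x ∉ Set.Ico (0:ℝ) 1 → u x = 0) :
    ∫ x, |u x| = ∫ x in Set.Ico (0:ℝ) 1, |u x| := by
  have h := integral_add_compl (measurableSet_Ico (a := (0:ℝ)) (b := 1)) hu.abs
  have h2 : ∫ x in (Set.Ico (0:ℝ) 1)ᶜ, |u x| = 0 := by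
    rw [setIntegral_congr_fun measurableSet_Ico.compl (g := fun _ => (0:ℝ))]
    · exact integral_zero _ _
    · intro x hx
      simp only
      rw [hus x hx, abs_zero]
  rw [← h, h2]
  ring

end PART5

section PART6A

lemma nat_pow_split {n n' : ℕ} (h : n ≤ n') : 2^(n'-n) * 2^n = 2^n' := by
  rw [← pow_add]; congr 1; omega

lemma dyadic_subset_of_desc {n k n' k' : ℕ} (h : Desc n k n' k') :
    dyadic n' k' ⊆ dyadic n k := by
  obtain ⟨hle, h2, h3⟩ := h
  have e := nat_pow_split hle
  have hn1 : k * 2^n' ≤ k' * 2^n := by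
    calc k * 2^n' = (k * 2^(n'-n)) * 2^n := by rw [← e]; ring
      _ ≤ k' * 2^n := Nat.mul_le_mul_right _ h2
  have hn2 : (k'+1) * 2^n ≤ (k+1) * 2^n' := by
    calc (k'+1) * 2^n ≤ ((k+1) * 2^(n'-n)) * 2^n := Nat.mul_le_mul_right _ h3
      _ = (k+1) * 2^n' := by rw [← e]; ring
  intro x hx
  obtain ⟨hx1, hx2⟩ := hx
  constructor
  · refine le_trans ?_ hx1
    rw [div_le_div_iff₀ (by positivity) (by positivity)]
    exact_mod_cast hn1
  · refine lt_of_lt_of_le hx2 ?_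
    rw [div_le_div_iff₀ (by positivity) (by positivity)]
    exact_mod_cast hn2

lemma desc_of_subset {N k n' k' : ℕ} (hle : N ≤ n') (h : dyadic n' k' ⊆ dyadic N k) :
    Desc N k n' k' := by
  have e := nat_pow_split hle
  have hmem : ((k':ℝ)/2^n') ∈ dyadic n' k' := by
    constructor
    · exact le_rfl
    · rw [div_lt_div_iff₀ (by positivity) (by positivity)]
      nlinarith [pow_pos (by norm_num : (0:ℝ) < 2) n']
  obtain ⟨hx1, hx2⟩ := h hmem
  refine ⟨hle, ?_, ?_⟩
  · have h1 : k * 2^n' ≤ k' * 2^N := by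
      have := (div_le_div_iff₀ (by positivity : (0:ℝ) < 2^N) (by positivity : (0:ℝ) < 2^n')).mp hx1
      exact_mod_cast this
    have h2 : (k * 2^(n'-N)) * 2^N ≤ k' * 2^N := by
      calc (k * 2^(n'-N)) * 2^N = k * 2^n' := by rw [← e]; ring
        _ ≤ k' * 2^N := h1
    have hp : 0 < 2^N := pow_pos (by norm_num) N
    exact Nat.le_of_mul_le_mul_right h2 hp
  · have h1 : k' * 2^N < (k+1) * 2^n' := by
      have := (div_lt_div_iff₀ (by positivity : (0:ℝ) < 2^n') (by positivity : (0:ℝ) < 2^N)).mp hx2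
      exact_mod_cast this
    have h2 : k' * 2^N < ((k+1) * 2^(n'-N)) * 2^N := by
      calc k' * 2^N < (k+1) * 2^n' := h1
        _ = ((k+1) * 2^(n'-N)) * 2^N := by rw [← e]; ring
    have hp : 0 < 2^N := pow_pos (by norm_num) N
    exact Nat.lt_of_mul_lt_mul_right h2
 
lemma dyadic_disj_same (n : ℕ) {i j : ℕ} (h : i ≠ j) :
    Disjoint (dyadic n i) (dyadic n j) := by
  unfold dyadic
  rw [Set.Ico_disjoint_Ico]
  rcases Nat.lt_or_ge i j with hij | hij
  · apply le_max_of_le_right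
    apply min_le_of_left_le
    rw [div_le_div_iff₀ (by positivity) (by positivity)]
    have h1 : (i+1) * 2^n ≤ j * 2^n := Nat.mul_le_mul_right _ (by omega)
    exact_mod_cast h1
  · have hij' : j < i := by omega
    apply le_max_of_le_left
    apply min_le_of_right_le
    rw [div_le_div_iff₀ (by positivity) (by positivity)]
    have h1 : (j+1) * 2^n ≤ i * 2^n := Nat.mul_le_mul_right _ (by omega)
    exact_mod_cast h1

lemma volume_dyadic (n k : ℕ) : volume (dyadic n k) = ENNReal.ofReal (1/2^n) := by
  unfold dyadic
  rw [Real.volume_Ico]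
  congr 1
  ring

lemma aI_desc (f : ℝ → ℝ) (hf : Integrable f) (N k : ℕ)
    (hz : ∀ n' k' : ℕ, N ≤ n' → haarC f n' k' = 0) :
    ∀ d k', Desc N k (N+d) k' → aI f (N+d) k' = aI f N k / 2^d := by
  intro d
  induction d with
  | zero =>
    intro k' hdesc
    obtain ⟨_, h2, h3⟩ := hdesc
    rw [show N + 0 - N = 0 by omega] at h2 h3
    simp at h2 h3
    have : k' = k := by omega
    subst this
    norm_num
  | succ d ih =>
    intro k' hdesc
    obtain ⟨_, h2, h3⟩ := hdesc
    rw [show N + (d+1) - N = d+1 by omega] at h2 h3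
    have e2 : (k * 2^d) * 2 = k * 2^(d+1) := by rw [pow_succ]; ring
    have e3 : ((k+1) * 2^d) * 2 = (k+1) * 2^(d+1) := by rw [pow_succ]; ring
    have hq : Desc N k (N+d) (k'/2) := by
      refine ⟨by omega, ?_, ?_⟩ <;> rw [show N + d - N = d by omega] <;> omega
    have hih := ih (k'/2) hq
    have hz' : haarC f (N+d) (k'/2) = 0 := hz (N+d) (k'/2) (by omega)
    have hsplit : k' = 2 * (k'/2) ∨ k' = 2 * (k'/2) + 1 := by omega
    rcases hsplit with he | he
    · rw [he, show N + (d+1) = (N+d) + 1 by omega, aI_child_plus f hf (N+d) (k'/2), hz', hih]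
      rw [pow_succ]; ring
    · rw [he, show N + (d+1) = (N+d) + 1 by omega, aI_child_minus f hf (N+d) (k'/2), hz', hih]
      rw [pow_succ]; ring

end PART6A

section PART6B

lemma ofReal_max_eq (r : ℝ) : ENNReal.ofReal r = ENNReal.ofReal (max r 0) := by
  rcases le_total r 0 with h | h
  · rw [max_eq_right h, ENNReal.ofReal_eq_zero.mpr h, ENNReal.ofReal_zero]
  · rw [max_eq_left h]

lemma Ico_subset_K (N k : ℕ) (a' b' : ℝ) (ha' : (k:ℝ)/2^N ≤ a') (hb' : b' ≤ ((k:ℝ)+1)/2^N) :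
    Set.Ico a' b' ⊆ dyadic N k := by
  intro x hx
  exact ⟨le_trans ha' hx.1, lt_of_lt_of_le hx.2 hb'⟩

lemma finiteM (u : ℝ → ℝ) (K : Set ℝ) (hu : Integrable u (volume.restrict K)) :
    IsFiniteMeasure ((volume.restrict K).withDensity (fun x => ENNReal.ofReal (u x))) := by
  constructor
  rw [withDensity_apply _ MeasurableSet.univ, Measure.restrict_univ]
  calc ∫⁻ x, ENNReal.ofReal (u x) ∂(volume.restrict K)
      ≤ ∫⁻ x, ‖u x‖₊ ∂(volume.restrict K) := by
        apply lintegral_mono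
        intro x
        show ENNReal.ofReal (u x) ≤ (‖u x‖₊ : ENNReal)
        rw [← ENNReal.ofReal_coe_nnreal, coe_nnnorm]
        exact ENNReal.ofReal_le_ofReal (le_abs_self _)
    _ < ⊤ := hu.2

lemma cell_measure_eq (f' : ℝ → ℝ) (hm : Measurable f') (hint' : Integrable f')
    (c : ℝ) (N k : ℕ)
    (hmean : ∀ n' k' : ℕ, Desc N k n' k' → ∫ x in dyadic n' k', (f' x - c) = 0) :
    ∀ n' k' : ℕ, Desc N k n' k' →
      ((volume.restrict (dyadic N k)).withDensity (fun x => ENNReal.ofReal (f' x - c)))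
          (dyadic n' k') =
      ((volume.restrict (dyadic N k)).withDensity (fun x => ENNReal.ofReal (c - f' x)))
          (dyadic n' k') := by
  intro n' k' hdesc
  have hsub : dyadic n' k' ⊆ dyadic N k := dyadic_subset_of_desc hdesc
  have hms : MeasurableSet (dyadic n' k') := measurable_dyadic _ _
  have hrr : (volume.restrict (dyadic N k)).restrict (dyadic n' k') =
      volume.restrict (dyadic n' k') := by
    rw [Measure.restrict_restrict hms, Set.inter_eq_self_of_subset_left hsub]
  have hcint : IntegrableOn (fun _ => c) (dyadic n' k') volume := by
    exact integrableOn_const (by rw [volume_dyadic]; exact ENNReal.ofReal_lt_top.ne)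
  have hpint : Integrable (fun x => (f' x - c) ⊔ 0) (volume.restrict (dyadic n' k')) :=
    (hint'.integrableOn.sub hcint).pos_part
  have hqint : Integrable (fun x => (c - f' x) ⊔ 0) (volume.restrict (dyadic n' k')) :=
    (hcint.sub hint'.integrableOn).pos_part
  have hpq : ∫ x in dyadic n' k', ((f' x - c) ⊔ 0) = ∫ x in dyadic n' k', ((c - f' x) ⊔ 0) := by
    have hsubint : ∫ x in dyadic n' k', (((f' x - c) ⊔ 0) - ((c - f' x) ⊔ 0)) = 0 := by
      have he : (fun x => ((f' x - c) ⊔ 0) - ((c - f' x) ⊔ 0)) = fun x => f' x - c := by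
        funext x
        rcases le_total (f' x - c) 0 with h | h
        · rw [sup_eq_right.mpr h, sup_eq_left.mpr (by linarith : (0:ℝ) ≤ c - f' x)]; ring
        · rw [sup_eq_left.mpr h, sup_eq_right.mpr (by linarith : c - f' x ≤ (0:ℝ))]; ring
      rw [he]
      exact hmean n' k' hdesc
    have := integral_sub hpint hqint
    rw [this] at hsubint
    linarith
  have h1 : ((volume.restrict (dyadic N k)).withDensity (fun x => ENNReal.ofReal (f' x - c)))
      (dyadic n' k') = ENNReal.ofReal (∫ x in dyadic n' k', ((f' x - c) ⊔ 0)) := by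
    rw [withDensity_apply _ hms, hrr]
    rw [ofReal_integral_eq_lintegral_ofReal hpint
      (Filter.Eventually.of_forall (fun x => le_max_right _ _))]
    apply lintegral_congr
    intro x
    exact (ofReal_max_eq _)
  have h2 : ((volume.restrict (dyadic N k)).withDensity (fun x => ENNReal.ofReal (c - f' x)))
      (dyadic n' k') = ENNReal.ofReal (∫ x in dyadic n' k', ((c - f' x) ⊔ 0)) := by
    rw [withDensity_apply _ hms, hrr]
    rw [ofReal_integral_eq_lintegral_ofReal hqint
      (Filter.Eventually.of_forall (fun x => le_max_right _ _))]
    apply lintegral_congr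
    intro x
    exact (ofReal_max_eq _)
  rw [h1, h2, hpq]

end PART6B

section PART6C

set_option maxHeartbeats 1000000 in
lemma mu_Ico_eq (f' : ℝ → ℝ) (hm : Measurable f') (hint' : Integrable f') (c : ℝ) (N k : ℕ)
    (hmean : ∀ n' k' : ℕ, Desc N k n' k' → ∫ x in dyadic n' k', (f' x - c) = 0)
    (a b : ℝ) :
    ((volume.restrict (dyadic N k)).withDensity (fun x => ENNReal.ofReal (f' x - c)))
      (Set.Ico a b) =
    ((volume.restrict (dyadic N k)).withDensity (fun x => ENNReal.ofReal (c - f' x)))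
      (Set.Ico a b) := by
  classical
  set a' : ℝ := max a ((k:ℝ)/2^N) with ha'
  set b' : ℝ := min b (((k:ℝ)+1)/2^N) with hb'
  have hIK : Set.Ico a b ∩ dyadic N k = Set.Ico a' b' := by
    unfold dyadic; rw [Set.Ico_inter_Ico]
  have hIK2 : Set.Ico a' b' ∩ dyadic N k = Set.Ico a' b' := by
    unfold dyadic; rw [Set.Ico_inter_Ico]
    have e1 : a' ⊔ (k:ℝ)/2^N = a' := sup_eq_left.mpr (le_max_right a _)
    have e2 : b' ⊓ (((k:ℝ))+1)/2^N = b' := inf_eq_left.mpr (min_le_right b _)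
    rw [e1, e2]
  have hred : ∀ dens : ℝ → ENNReal,
      ((volume.restrict (dyadic N k)).withDensity dens) (Set.Ico a b) =
      ((volume.restrict (dyadic N k)).withDensity dens) (Set.Ico a' b') := by
    intro dens
    rw [withDensity_apply _ measurableSet_Ico, withDensity_apply _ measurableSet_Ico,
        Measure.restrict_restrict measurableSet_Ico, Measure.restrict_restrict measurableSet_Ico,
        hIK, hIK2]
  rw [hred, hred]
  rcases lt_or_ge a' b' with hab' | hab'
  swap
  · rw [Set.Ico_eq_empty (not_lt.mpr hab')]
    simp
  -- the dyadic exhaustion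
  set F : ℕ → Finset ℕ :=
    fun m => (Finset.range ((k+1) * 2^m)).filter (fun j => dyadic (N+m) j ⊆ Set.Ico a' b')
    with hF
  set E : ℕ → Set ℝ := fun m => ⋃ j ∈ F m, dyadic (N+m) j with hE
  have hFsub : ∀ m j, j ∈ F m → dyadic (N+m) j ⊆ Set.Ico a' b' := by
    intro m j hj
    exact (Finset.mem_filter.mp hj).2
  have hIcoK : Set.Ico a' b' ⊆ dyadic N k :=
    Ico_subset_K N k a' b' (le_max_right _ _) (min_le_right _ _)
  have hdescm : ∀ m j, j ∈ F m → Desc N k (N+m) j := by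
    intro m j hj
    exact desc_of_subset (by omega) ((hFsub m j hj).trans hIcoK)
  have hEsub : ∀ m, E m ⊆ Set.Ico a' b' := by
    intro m
    exact Set.iUnion₂_subset (fun j hj => hFsub m j hj)
  have hEmono : Monotone E := by
    apply monotone_nat_of_le_succ
    intro m x hx
    rw [hE] at hx ⊢
    obtain ⟨j, hjF, hxj⟩ := Set.mem_iUnion₂.mp hx
    have hsplit := dyadic_split (N+m) j
    have hjr : j < (k+1) * 2^m := Finset.mem_range.mp (Finset.mem_filter.mp hjF).1
    have e2 : ((k+1) * 2^m) * 2 = (k+1) * 2^(m+1) := by rw [pow_succ]; ring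
    rw [hsplit] at hxj
    rcases hxj with hx1 | hx1
    · apply Set.mem_biUnion (s := F (m+1)) ?_ hx1
      apply Finset.mem_filter.mpr
      constructor
      · apply Finset.mem_range.mpr; omega
      · refine Set.Subset.trans ?_ (hFsub m j hjF)
        rw [hsplit]; exact Set.subset_union_left
    · apply Set.mem_biUnion (s := F (m+1)) ?_ hx1
      apply Finset.mem_filter.mpr
      constructor
      · apply Finset.mem_range.mpr; omega
      · refine Set.Subset.trans ?_ (hFsub m j hjF)
        rw [hsplit]; exact Set.subset_union_right
  have hcover : Set.Ico a' b' ⊆ {a'} ∪ ⋃ m, E m := by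
    intro x hx
    by_cases hxa : x = a'
    · left; simp [hxa]
    · right
      have hxgt : a' < x := lt_of_le_of_ne hx.1 (Ne.symm hxa)
      have hxb : x < b' := hx.2
      have hx0 : 0 ≤ x := by
        have h1 : (0:ℝ) ≤ (k:ℝ)/2^N := by positivity
        have h2 : (k:ℝ)/2^N ≤ a' := le_max_right _ _
        linarith
      have hεpos : 0 < min (x - a') (b' - x) := lt_min (by linarith) (by linarith)
      obtain ⟨m, hm'⟩ := exists_pow_lt_of_lt_one hεpos (by norm_num : (1:ℝ)/2 < 1)
      have hm2 : 1/(2:ℝ)^(N+m) < min (x - a') (b' - x) := by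
        refine lt_of_le_of_lt ?_ hm'
        rw [div_pow, one_pow]
        apply div_le_div_of_nonneg_left (by norm_num) (by positivity)
        exact pow_le_pow_right₀ (by norm_num) (by omega)
      have hminl := (lt_min_iff.mp hm2).1
      have hminr := (lt_min_iff.mp hm2).2
      have hp2 : (0:ℝ) < 2^(N+m) := by positivity
      set j := ⌊x * 2^(N+m)⌋₊ with hjdef
      have hj1 : (j:ℝ) ≤ x * 2^(N+m) := Nat.floor_le (by positivity)
      have hj2 : x * 2^(N+m) < (j:ℝ) + 1 := Nat.lt_floor_add_one _
      have hmemx : x ∈ dyadic (N+m) j := by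
        constructor
        · rw [div_le_iff₀ hp2]; linarith
        · rw [lt_div_iff₀ hp2]; linarith
      have hsubJ : dyadic (N+m) j ⊆ Set.Ico a' b' := by
        intro y hy
        have hy1 : (j:ℝ)/2^(N+m) ≤ y := hy.1
        have hy2 : y < ((j:ℝ)+1)/2^(N+m) := hy.2
        constructor
        · have h2 : x - 1/2^(N+m) < (j:ℝ)/2^(N+m) := by
            rw [lt_div_iff₀ hp2]
            have : (x - 1/2^(N+m)) * 2^(N+m) = x * 2^(N+m) - 1 := by
              field_simp
            rw [this]; linarith
          linarith
        · have h2 : ((j:ℝ)+1)/2^(N+m) ≤ x + 1/2^(N+m) := by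
            rw [div_le_iff₀ hp2]
            have : (x + 1/2^(N+m)) * 2^(N+m) = x * 2^(N+m) + 1 := by
              field_simp
            rw [this]; linarith
          linarith
      have hjr : j < (k+1) * 2^m := by
        have hb'K : b' ≤ ((k:ℝ)+1)/2^N := min_le_right _ _
        have hxK : x < ((k:ℝ)+1)/2^N := lt_of_lt_of_le hxb hb'K
        have h2 : x * 2^(N+m) < ((k:ℝ)+1) * 2^m := by
          have hpow : (2:ℝ)^(N+m) = 2^N * 2^m := by rw [pow_add]
          rw [hpow]
          have hxK' : x * 2^N < ((k:ℝ)+1) := by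
            rw [← lt_div_iff₀ (by positivity : (0:ℝ) < 2^N)]
            exact hxK
          nlinarith [pow_pos (by norm_num : (0:ℝ) < 2) m, pow_pos (by norm_num : (0:ℝ) < 2) N]
        have h3 : (j:ℝ) < ((k:ℝ)+1) * 2^m := lt_of_le_of_lt hj1 h2
        have h4 : (j:ℝ) < (((k+1) * 2^m : ℕ) : ℝ) := by push_cast; linarith
        exact_mod_cast h4
      apply Set.mem_iUnion.mpr ⟨m, ?_⟩
      apply Set.mem_biUnion (s := F m) ?_ hmemx
      exact Finset.mem_filter.mpr ⟨Finset.mem_range.mpr hjr, hsubJ⟩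
  have hsing : ∀ dens : ℝ → ENNReal,
      ((volume.restrict (dyadic N k)).withDensity dens) {a'} = 0 := by
    intro dens
    apply (withDensity_absolutelyContinuous _ _)
    rw [Measure.restrict_apply (measurableSet_singleton _)]
    exact measure_mono_null Set.inter_subset_left Real.volume_singleton
  have hμE : ∀ m,
      ((volume.restrict (dyadic N k)).withDensity (fun x => ENNReal.ofReal (f' x - c))) (E m) =
      ((volume.restrict (dyadic N k)).withDensity (fun x => ENNReal.ofReal (c - f' x))) (E m) := by
    intro m
    rw [hE]
    simp only
    rw [measure_biUnion_finset (fun i _ j _ hij => dyadic_disj_same _ hij)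
        (fun j _ => measurable_dyadic _ _),
      measure_biUnion_finset (fun i _ j _ hij => dyadic_disj_same _ hij)
        (fun j _ => measurable_dyadic _ _)]
    apply Finset.sum_congr rfl
    intro j hj
    exact cell_measure_eq f' hm hint' c N k hmean (N+m) j (hdescm m j hj)
  have hsq : ∀ dens : ℝ → ENNReal,
      ((volume.restrict (dyadic N k)).withDensity dens) (Set.Ico a' b') =
      ((volume.restrict (dyadic N k)).withDensity dens) (⋃ m, E m) := by
    intro dens
    apply le_antisymm
    · calc ((volume.restrict (dyadic N k)).withDensity dens) (Set.Ico a' b')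
          ≤ ((volume.restrict (dyadic N k)).withDensity dens) ({a'} ∪ ⋃ m, E m) :=
            measure_mono hcover
        _ ≤ ((volume.restrict (dyadic N k)).withDensity dens) {a'} +
            ((volume.restrict (dyadic N k)).withDensity dens) (⋃ m, E m) :=
            measure_union_le _ _
        _ = ((volume.restrict (dyadic N k)).withDensity dens) (⋃ m, E m) := by
            rw [hsing, zero_add]
    · exact measure_mono (Set.iUnion_subset hEsub)
  rw [hsq, hsq, Directed.measure_iUnion (hEmono.directed_le),
      Directed.measure_iUnion (hEmono.directed_le)]
  exact iSup_congr hμE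

end PART6C

section PART6D

set_option maxHeartbeats 1000000 in
lemma cell_abs_eq (f : ℝ → ℝ) (hf : Integrable f) (N k : ℕ)
    (hz : ∀ n' k' : ℕ, N ≤ n' → haarC f n' k' = 0) :
    ∫ x in dyadic N k, |f x| = |aI f N k| := by
  classical
  set f' := hf.1.mk f with hf'def
  have hf'meas : Measurable f' := hf.1.stronglyMeasurable_mk.measurable
  have hae : f =ᵐ[volume] f' := hf.1.ae_eq_mk
  have hint' : Integrable f' := hf.congr hae
  set c : ℝ := 2^N * aI f N k with hc
  have hmean : ∀ n' k' : ℕ, Desc N k n' k' → ∫ x in dyadic n' k', (f' x - c) = 0 := by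
    intro n' k' hdesc
    have hle : N ≤ n' := hdesc.1
    have haI' : aI f n' k' = aI f N k / 2^(n'-N) := by
      have h := aI_desc f hf N k hz (n'-N) k'
        (by rw [show N + (n'-N) = n' from by omega]; exact hdesc)
      rw [show N + (n'-N) = n' from by omega] at h
      exact h
    have hcint : IntegrableOn (fun _ => c) (dyadic n' k') volume := by
      exact integrableOn_const (by rw [volume_dyadic]; exact ENNReal.ofReal_lt_top.ne)
    rw [integral_sub hint'.integrableOn hcint]
    have hf'aI : ∫ x in dyadic n' k', f' x = aI f n' k' :=
      (integral_congr_ae (ae_restrict_of_ae hae)).symm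
    rw [hf'aI, haI', setIntegral_const, smul_eq_mul, measureReal_def, volume_dyadic,
        ENNReal.toReal_ofReal (by positivity), hc]
    have hpow : (2:ℝ)^n' = 2^N * 2^(n'-N) := by rw [← pow_add]; congr 1; omega
    rw [hpow]
    field_simp
    try ring
  have hKint : Integrable (fun x => f' x - c) (volume.restrict (dyadic N k)) :=
    hint'.integrableOn.sub (integrableOn_const
      (by rw [volume_dyadic]; exact ENNReal.ofReal_lt_top.ne))
  haveI hfin1 := finiteM (fun x => f' x - c) (dyadic N k) hKint
  have hext : ((volume.restrict (dyadic N k)).withDensity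
        (fun x => ENNReal.ofReal (f' x - c))) =
      ((volume.restrict (dyadic N k)).withDensity
        (fun x => ENNReal.ofReal (c - f' x))) :=
    MeasureTheory.Measure.ext_of_Ico _ _
      (fun a b _ => mu_Ico_eq f' hf'meas hint' c N k hmean a b)
  have hup : ∀ᵐ x ∂(volume.restrict (dyadic N k)), f' x ≤ c := by
    have hms : MeasurableSet {x : ℝ | c < f' x} := measurableSet_lt measurable_const hf'meas
    have h2 : ((volume.restrict (dyadic N k)).withDensity
        (fun x => ENNReal.ofReal (c - f' x))) {x | c < f' x} = 0 := by
      rw [withDensity_apply _ hms]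
      have hzero : ∀ᵐ x ∂(volume.restrict (dyadic N k)),
          x ∈ {x : ℝ | c < f' x} → ENNReal.ofReal (c - f' x) = (fun _ => (0:ENNReal)) x := by
        apply ae_of_all
        intro x hx
        simp only [Set.mem_setOf_eq] at hx
        exact ENNReal.ofReal_eq_zero.mpr (by linarith)
      rw [setLIntegral_congr_fun_ae hms hzero]
      simp
    have h1 : ((volume.restrict (dyadic N k)).withDensity
        (fun x => ENNReal.ofReal (f' x - c))) {x | c < f' x} = 0 := by
      rw [hext]; exact h2
    rw [withDensity_apply _ hms] at h1
    have hmeas1 : Measurable (fun x => ENNReal.ofReal (f' x - c)) :=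
      (hf'meas.sub measurable_const).ennreal_ofReal
    have h3 := (lintegral_eq_zero_iff hmeas1).mp h1
    rw [Filter.EventuallyEq, ae_restrict_iff' hms] at h3
    apply h3.mono
    intro x hx
    by_contra hgt
    push_neg at hgt
    have h4 := hx (by exact hgt)
    rw [Pi.zero_apply, ENNReal.ofReal_eq_zero] at h4
    linarith
  have hlo : ∀ᵐ x ∂(volume.restrict (dyadic N k)), c ≤ f' x := by
    have hms : MeasurableSet {x : ℝ | f' x < c} := measurableSet_lt hf'meas measurable_const
    have h2 : ((volume.restrict (dyadic N k)).withDensity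
        (fun x => ENNReal.ofReal (f' x - c))) {x | f' x < c} = 0 := by
      rw [withDensity_apply _ hms]
      have hzero : ∀ᵐ x ∂(volume.restrict (dyadic N k)),
          x ∈ {x : ℝ | f' x < c} → ENNReal.ofReal (f' x - c) = (fun _ => (0:ENNReal)) x := by
        apply ae_of_all
        intro x hx
        simp only [Set.mem_setOf_eq] at hx
        exact ENNReal.ofReal_eq_zero.mpr (by linarith)
      rw [setLIntegral_congr_fun_ae hms hzero]
      simp
    have h1 : ((volume.restrict (dyadic N k)).withDensity
        (fun x => ENNReal.ofReal (c - f' x))) {x | f' x < c} = 0 := by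
      rw [← hext]; exact h2
    rw [withDensity_apply _ hms] at h1
    have hmeas2 : Measurable (fun x => ENNReal.ofReal (c - f' x)) :=
      (measurable_const.sub hf'meas).ennreal_ofReal
    have h3 := (lintegral_eq_zero_iff hmeas2).mp h1
    rw [Filter.EventuallyEq, ae_restrict_iff' hms] at h3
    apply h3.mono
    intro x hx
    by_contra hgt
    push_neg at hgt
    have h4 := hx (by exact hgt)
    rw [Pi.zero_apply, ENNReal.ofReal_eq_zero] at h4
    linarith
  have hconst : ∀ᵐ x ∂(volume.restrict (dyadic N k)), f x = c :=
    ((ae_restrict_of_ae hae).and (hup.and hlo)).mono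
      (fun x hx => hx.1.trans (le_antisymm hx.2.1 hx.2.2))
  have h6 : ∫ x in dyadic N k, |f x| = ∫ x in dyadic N k, |c| :=
    integral_congr_ae (hconst.mono (fun x hx => by show |f x| = |c|; rw [hx]))
  have h7 : aI f N k = c / 2^N := by rw [hc]; field_simp
  rw [h6, setIntegral_const, smul_eq_mul, measureReal_def, volume_dyadic,
      ENNReal.toReal_ofReal (by positivity), h7, abs_div,
      abs_of_pos (by positivity : (0:ℝ) < (2:ℝ)^N)]
  ring

end PART6D

end S9

/-- Lemma 3.5: if `f, g` have finite disjoint Haar supports strictly inside `[0,1]`,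
`supp_H(g)` avoids `F(f)`, `|c_J(f)| ≥ α` on `supp_H(f)` and `|c_J(g)| ≤ 1`, then
`‖f‖ ≤ (5/α + 1)‖f + g‖`. -/
theorem stmt9 (f g : ℝ → ℝ) (hf : Integrable f) (hg : Integrable g)
    (hfs : ∀ x, x ∉ Set.Ico (0 : ℝ) 1 → f x = 0)
    (hgs : ∀ x, x ∉ Set.Ico (0 : ℝ) 1 → g x = 0)
    (hfroot : hcoef f HIdx.root = 0) (hgroot : hcoef g HIdx.root = 0)
    (hf01 : haarC f 0 0 = 0) (hg01 : haarC g 0 0 = 0)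
    (hffin : {p : ℕ × ℕ | p.2 < 2 ^ p.1 ∧ haarC f p.1 p.2 ≠ 0}.Finite)
    (hgfin : {p : ℕ × ℕ | p.2 < 2 ^ p.1 ∧ haarC g p.1 p.2 ≠ 0}.Finite)
    (hdisj : ∀ n k : ℕ, k < 2 ^ n → haarC f n k ≠ 0 → haarC g n k = 0)
    (hgF : ∀ n k : ℕ, k < 2 ^ n → haarC g n k ≠ 0 →
      ¬ (haarC f n k = 0 ∧ (haarC f (n + 1) (2 * k) ≠ 0 ∨ haarC f (n + 1) (2 * k + 1) ≠ 0)))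
    (α : ℝ) (hα : 0 < α)
    (hflb : ∀ n k : ℕ, k < 2 ^ n → haarC f n k ≠ 0 → α ≤ |haarC f n k|)
    (hgub : ∀ n k : ℕ, k < 2 ^ n → |haarC g n k| ≤ 1) :
    (∫ x, |f x|) ≤ (5 / α + 1) * ∫ x, |f x + g x| := by
  classical
  have hβ : (0:ℝ) < 5/α := by positivity
  have hαβ : α * (5/α) = 5 := by field_simp
  obtain ⟨N, hN⟩ := S9.exists_N f g hfs hgs hffin hgfin
  have hNf : ∀ n k, N ≤ n → haarC f n k = 0 := fun n k h => (hN n k h).1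
  have hgroot' : S9.aI g 0 0 = 0 := by
    unfold S9.aI; rw [S9.dyadic_zero]; exact hgroot
  have hfroot' : S9.aI f 0 0 = 0 := by
    unfold S9.aI; rw [S9.dyadic_zero]; exact hfroot
  have hbB := S9.bBound g hg hgroot' hgub
  have hh : Integrable (fun x => f x + g x) := hf.add hg
  have hhs : ∀ x, x ∉ Set.Ico (0 : ℝ) 1 → f x + g x = 0 := by
    intro x hx; rw [hfs x hx, hgs x hx]; ring
  have hleaf : (fun j => ∫ x in dyadic N j, |f x|) = (fun j => |S9.aI f N j|) := by
    funext j
    exact S9.cell_abs_eq f hf N j (fun n' k' hn' => (hN n' k' hn').1)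
  have hTf : ∫ x, |f x| = S9.Tree (fun j => |S9.aI f N j|) N 0 := by
    rw [S9.int_eq_01 f hf hfs, ← S9.dyadic_zero,
        ← S9.Tree_int f hf N N 0 0 (by omega), hleaf]
  have hTh : S9.Tree (fun j => |S9.aI (fun x => f x + g x) N j|) N 0 ≤ ∫ x, |f x + g x| := by
    calc S9.Tree (fun j => |S9.aI (fun x => f x + g x) N j|) N 0
        ≤ S9.Tree (fun j => ∫ x in dyadic N j, |f x + g x|) N 0 :=
          S9.Tree_mono _ _ (fun j => S9.abs_aI_le _ N j) N 0
      _ = ∫ x in dyadic 0 0, |f x + g x| :=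
          S9.Tree_int (fun x => f x + g x) hh N N 0 0 (by omega)
      _ = ∫ x, |f x + g x| := by
          rw [S9.dyadic_zero, ← S9.int_eq_01 _ hh hhs]
  have hpos : 0 ≤ ∫ x, |f x + g x| := integral_nonneg (fun x => abs_nonneg _)
  by_cases hact : S9.act f 0 0
  · have hmain := S9.main_ind hf hg hα hβ hαβ hNf hdisj hgF hflb hbB N 0 0
      (by omega) (by norm_num) hact
    have hWroot : S9.Wnode f g α (5/α) 0 0 = 2 := by
      unfold S9.Wnode
      rw [if_pos hf01, hfroot']
      unfold S9.w0
      rw [Real.sign_zero]; ring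
    rw [hWroot] at hmain
    rw [hTf]
    have h2 := mul_le_mul_of_nonneg_left hTh (by positivity : (0:ℝ) ≤ 1 + 5/α)
    have he : (5/α + 1) * ∫ x, |f x + g x| = (1 + 5/α) * ∫ x, |f x + g x| := by ring
    rw [he]
    linarith
  · have hdead := S9.Tree_dead f hf N N 0 0 (by omega) hact
    rw [hTf, hdead, hfroot', abs_zero]
    have : (0:ℝ) ≤ 5/α + 1 := by positivity
    exact mul_nonneg this hpos
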